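/- Let g ≥ 1 and n ≥ 2, and let 1 ≤ i ≤ j ≤ n−1. Then in the group PG(g,0,n): x_j F_i x_j⁻¹ = F_{j+1}⁻¹ F_i F_{j+1} (the verification of relation (PT2) in the proof of Proposition 3.3). -/
import Mathlib


namespace LabruereParisP

/-- `altWord a b m` is the alternating word `prod(a,b,m) = abab⋯` of length `m`. -/
def altWord {α : Type*} (a b : α) : ℕ → FreeGroup α
  | 0 => 1
  | k + 1 => FreeGroup.of a * altWord b a k

/-- The vertex set of the Coxeter graph `PΓ_{g,0,n}`: `Sum.inl i` is `x_i`
(`0 ≤ i ≤ n`), `Sum.inr (Sum.inl j)` is `y_{j+1}` (`1 ≤ j+1 ≤ 2g-1`), and the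
`Unit` vertex is `z`. -/
abbrev S (g n : ℕ) := Fin (n + 1) ⊕ Fin (2 * g - 1) ⊕ Unit

/-- The Coxeter matrix of `PΓ_{g,0,n}`: `m(x_i,y_1) = 3`, `m(y_j,y_{j+1}) = 3`,
`m(z,y_3) = 3`, and label `2` for every other pair of distinct vertices. -/
def cox (g n : ℕ) : S g n → S g n → ℕ
  | Sum.inl _, Sum.inr (Sum.inl j) => if (j : ℕ) = 0 then 3 else 2
  | Sum.inr (Sum.inl j), Sum.inl _ => if (j : ℕ) = 0 then 3 else 2
  | Sum.inr (Sum.inl j), Sum.inr (Sum.inl k) =>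
      if j = k then 1 else if (j : ℕ) + 1 = (k : ℕ) ∨ (k : ℕ) + 1 = (j : ℕ) then 3 else 2
  | Sum.inr (Sum.inr ()), Sum.inr (Sum.inl j) => if (j : ℕ) = 2 then 3 else 2
  | Sum.inr (Sum.inl j), Sum.inr (Sum.inr ()) => if (j : ℕ) = 2 then 3 else 2
  | a, b => if a = b then 1 else 2

/-- The generator `x_i` of the free group (`0 ≤ i ≤ n`; junk value `1` out of range). -/
def fx (g n i : ℕ) : FreeGroup (S g n) :=
  if h : i < n + 1 then FreeGroup.of (Sum.inl ⟨i, h⟩) else 1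

/-- The generator `y_j` (`1 ≤ j ≤ 2g-1`; junk value `1` out of range). -/
def fy (g n j : ℕ) : FreeGroup (S g n) :=
  if h : 1 ≤ j ∧ j ≤ 2 * g - 1 then FreeGroup.of (Sum.inr (Sum.inl ⟨j - 1, by omega⟩)) else 1

/-- The generator `z`. -/
def fz (g n : ℕ) : FreeGroup (S g n) := FreeGroup.of (Sum.inr (Sum.inr ()))

/-- The Artin relators of `PΓ_{g,0,n}`. -/
def artinRels (g n : ℕ) : Set (FreeGroup (S g n)) :=
  {w | ∃ a b : S g n, a ≠ b ∧
      w = altWord a b (cox g n a b) * (altWord b a (cox g n a b))⁻¹}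

/-- `W(i,j) = (x_jy_1x_{i+1}x_jy_1x_j)⁻¹ · x_i · (x_jy_1x_{i+1}x_jy_1x_j)`. -/
def Wrel (g n i j : ℕ) : FreeGroup (S g n) :=
  (fx g n j * fy g n 1 * fx g n (i + 1) * fx g n j * fy g n 1 * fx g n j)⁻¹ *
    fx g n i *
    (fx g n j * fy g n 1 * fx g n (i + 1) * fx g n j * fy g n 1 * fx g n j)

/-- The relators (PR1)–(PR6) of Proposition 3.3 of Labruère–Paris. -/
def prRels (g n : ℕ) : Set (FreeGroup (S g n)) :=
  {w |
    -- (PR1)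
    (2 ≤ g ∧ w = (fy g n 1 * fy g n 2 * fy g n 3 * fz g n) ^ 10 *
        ((fx g n 0 * fy g n 1 * fy g n 2 * fy g n 3 * fz g n) ^ 6)⁻¹) ∨
    -- (PR2)
    (3 ≤ g ∧ w = (fy g n 1 * fy g n 2 * fy g n 3 * fz g n * fy g n 4 * fy g n 5) ^ 12 *
        ((fx g n 0 * fy g n 1 * fy g n 2 * fy g n 3 * fz g n *
          fy g n 4 * fy g n 5) ^ 9)⁻¹) ∨
    -- (PR3)
    (∃ i j k : ℕ, k < j ∧ j < i ∧ i ≤ n - 1 ∧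
        w = fx g n k * Wrel g n i j * (Wrel g n i j * fx g n k)⁻¹) ∨
    -- (PR4)
    (2 ≤ g ∧ ∃ i j : ℕ, j < i ∧ i ≤ n - 1 ∧
        w = fy g n 2 * Wrel g n i j * (Wrel g n i j * fy g n 2)⁻¹) ∨
    -- (PR5)
    (2 ≤ g ∧ w = (fx g n 0 * fx g n 1 * fy g n 1 * fy g n 2 * fy g n 3 * fz g n) ^ 5 *
        ((fx g n 1 * fy g n 1 * fy g n 2 * fy g n 3 * fz g n) ^ 6)⁻¹) ∨
    -- (PR6)
    (2 ≤ g ∧ ∃ i : ℕ, 1 ≤ i ∧ i ≤ n - 1 ∧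
        w = (fx g n i * fx g n (i + 1) * fy g n 1 * fy g n 2 * fy g n 3 * fz g n) ^ 5 *
          ((fx g n (i + 1) * fy g n 1 * fy g n 2 * fy g n 3 * fz g n) ^ 6)⁻¹ *
          ((fx g n 0 * fx g n i * fy g n 1 * fx g n (i + 1)) ^ 3 *
            ((fx g n 0 * fy g n 1 * fx g n (i + 1)) ^ 4)⁻¹)⁻¹)}

/-- The group `PG(g,0,n)` of Proposition 3.3: the quotient of `A(PΓ_{g,0,n})`
by the relations (PR1)–(PR6). -/
abbrev PG (g n : ℕ) := PresentedGroup (artinRels g n ∪ prRels g n)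

/-- The image of `x_i` in `PG(g,0,n)`. -/
def X (g n i : ℕ) : PG g n := PresentedGroup.mk _ (fx g n i)

/-- The image of `y_j` in `PG(g,0,n)`. -/
def Y (g n j : ℕ) : PG g n := PresentedGroup.mk _ (fy g n j)

/-- The image of `z` in `PG(g,0,n)`. -/
def Z (g n : ℕ) : PG g n := PresentedGroup.mk _ (fz g n)

/-- `Δ(z_1,…,z_m) = (z_1⋯z_m)(z_1⋯z_{m-1})⋯(z_1z_2)z_1`. -/
def deltaList {G : Type*} [Group G] (zs : List G) : G :=
  (((List.range zs.length).reverse).map fun k => (zs.take (k + 1)).prod).prod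

/-- `F_i = f(α_i)` (`1 ≤ i ≤ n`): for `i = n`, `F_n = x_{n-1}⁻¹x_n`; for
`1 ≤ i ≤ n-1`,
`F_i = x_{n-1}⁻¹·(x_{i-1}y_1x_nx_{i-1}y_1x_{i-1})⁻¹·x_n⁻¹x_{n-1}·(x_{i-1}y_1x_nx_{i-1}y_1x_{i-1})·x_{n-1}`. -/
def F (g n i : ℕ) : PG g n :=
  if i = n then (X g n (n - 1))⁻¹ * X g n n
  else
    (X g n (n - 1))⁻¹ *
      (X g n (i - 1) * Y g n 1 * X g n n * X g n (i - 1) * Y g n 1 * X g n (i - 1))⁻¹ *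
      (X g n n)⁻¹ * X g n (n - 1) *
      (X g n (i - 1) * Y g n 1 * X g n n * X g n (i - 1) * Y g n 1 * X g n (i - 1)) *
      X g n (n - 1)

/-- `B_i = f(β_i) = Δ(x_{n-1},y_1,…,y_i)⁻¹ · x_{n-1}⁻¹x_n · Δ(x_{n-1},y_1,…,y_i)`
(`1 ≤ i ≤ 2g-1`). -/
def B (g n i : ℕ) : PG g n :=
  (deltaList (X g n (n - 1) :: (List.range i).map fun k => Y g n (k + 1)))⁻¹ *
    (X g n (n - 1))⁻¹ * X g n n *
    deltaList (X g n (n - 1) :: (List.range i).map fun k => Y g n (k + 1))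

end LabruereParisP

namespace LP2aux
variable {G : Type*} [Group G]

lemma z2 {a b c d : G} (h : a * b = c * d) (z : G) : a * (b * z) = c * (d * z) := by
  rw [← mul_assoc, h, mul_assoc]

lemma z3 {a b c d e f : G} (h : a * b * c = d * e * f) (z : G) :
    a * (b * (c * z)) = d * (e * (f * z)) := by
  calc a * (b * (c * z)) = (a * b * c) * z := by group
    _ = (d * e * f) * z := by rw [h]
    _ = d * (e * (f * z)) := by group

lemma zc {a b : G} (h : Commute a b) (z : G) : a * (b * z) = b * (a * z) := z2 h.eq z

lemma brd_inv {u y : G} (h : u*y*u = y*u*y) : u⁻¹*y⁻¹*u⁻¹ = y⁻¹*u⁻¹*y⁻¹ := by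
  calc u⁻¹*y⁻¹*u⁻¹ = (u*y*u)⁻¹ := by group
    _ = (y*u*y)⁻¹ := by rw [h]
    _ = y⁻¹*u⁻¹*y⁻¹ := by group

lemma brd_1 {u y : G} (h : u*y*u = y*u*y) : u⁻¹*y*u = y*u*y⁻¹ := by
  calc u⁻¹*y*u = u⁻¹*(y*u*y)*y⁻¹ := by group
    _ = u⁻¹*(u*y*u)*y⁻¹ := by rw [h]
    _ = y*u*y⁻¹ := by group

lemma brd_2 {u y : G} (h : u*y*u = y*u*y) : u*y*u⁻¹ = y⁻¹*u*y := by
  calc u*y*u⁻¹ = y⁻¹*(y*u*y)*u⁻¹ := by group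
    _ = y⁻¹*(u*y*u)*u⁻¹ := by rw [h]
    _ = y⁻¹*u*y := by group

lemma brd_3 {u y : G} (h : u*y*u = y*u*y) : u*y⁻¹*u⁻¹ = y⁻¹*u⁻¹*y := by
  calc u*y⁻¹*u⁻¹ = y⁻¹*(y*u*y⁻¹)*u⁻¹ := by group
    _ = y⁻¹*(u⁻¹*y*u)*u⁻¹ := by rw [← brd_1 h]
    _ = y⁻¹*u⁻¹*y := by group

lemma comm_conj (a : G) {x z : G} (h : Commute x z) : Commute (a*x*a⁻¹) (a*z*a⁻¹) := by
  rw [commute_iff_eq] at h ⊢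
  calc a*x*a⁻¹*(a*z*a⁻¹) = a*(x*z)*a⁻¹ := by group
    _ = a*(z*x)*a⁻¹ := by rw [h]
    _ = a*z*a⁻¹*(a*x*a⁻¹) := by group

lemma comm_conj' (a : G) {x z : G} (h : Commute x z) : Commute (a⁻¹*x*a) (a⁻¹*z*a) := by
  have h2 := comm_conj a⁻¹ h
  rwa [inv_inv] at h2

lemma comm_conj_cancel (a : G) {x z : G} (h : Commute (a*x*a⁻¹) (a*z*a⁻¹)) : Commute x z := by
  rw [commute_iff_eq] at h ⊢
  have h2 : a*(x*z)*a⁻¹ = a*(z*x)*a⁻¹ := by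
    calc a*(x*z)*a⁻¹ = a*x*a⁻¹*(a*z*a⁻¹) := by group
      _ = a*z*a⁻¹*(a*x*a⁻¹) := h
      _ = a*(z*x)*a⁻¹ := by group
  exact mul_left_cancel (mul_right_cancel h2)

lemma comm_conj_cancel' (a : G) {x z : G} (h : Commute (a⁻¹*x*a) (a⁻¹*z*a)) : Commute x z := by
  apply comm_conj_cancel a⁻¹
  rw [inv_inv]
  exact h


lemma lem_tA {u t y : G} (hut : Commute u t)
    (bu : u*y*u = y*u*y) (bt : t*y*t = y*t*y) :
    t * (u*y*t*u*y*u) = (u*y*t*u*y*u) * u := by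
  have h : ∀ z : G, t * (u * (y * (t * (u * (y * (u * (z))))))) =
      u * (y * (t * (u * (y * (u * (u * (z))))))) := by
    intro z
    calc t * (u * (y * (t * (u * (y * (u * (z)))))))
        _ = u * (t * (y * (t * (u * (y * (u * (z))))))) := by rw [zc ((hut).symm) (y * (t * (u * (y * (u * (z))))))]
        _ = u * (y * (t * (y * (u * (y * (u * (z))))))) := by rw [z3 bt (u * (y * (u * (z))))]
        _ = u * (y * (t * (u * (y * (u * (u * (z))))))) := by rw [(z3 bu (u * (z))).symm]
  calc t * (u*y*t*u*y*u) = t * (u * (y * (t * (u * (y * (u * ((1:G)))))))) := by group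
    _ = u * (y * (t * (u * (y * (u * (u * ((1:G)))))))) := h 1
    _ = (u*y*t*u*y*u) * u := by group

lemma lem_At {u t y : G} (hut : Commute u t)
    (bu : u*y*u = y*u*y) (bt : t*y*t = y*t*y) :
    (u*y*t*u*y*u) * t = u * (u*y*t*u*y*u) := by
  have h : ∀ z : G, u * (y * (t * (u * (y * (u * (t * (z))))))) =
      u * (u * (y * (t * (u * (y * (u * (z))))))) := by
    intro z
    calc u * (y * (t * (u * (y * (u * (t * (z)))))))
        _ = u * (y * (t * (u * (y * (t * (u * (z))))))) := by rw [zc (hut) (z)]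
        _ = u * (y * (u * (t * (y * (t * (u * (z))))))) := by rw [zc ((hut).symm) (y * (t * (u * (z))))]
        _ = u * (y * (u * (y * (t * (y * (u * (z))))))) := by rw [z3 bt (u * (z))]
        _ = u * (u * (y * (u * (t * (y * (u * (z))))))) := by rw [(z3 bu (t * (y * (u * (z))))).symm]
        _ = u * (u * (y * (t * (u * (y * (u * (z))))))) := by rw [zc (hut) (y * (u * (z)))]
  calc (u*y*t*u*y*u) * t = u * (y * (t * (u * (y * (u * (t * ((1:G)))))))) := by group
    _ = u * (u * (y * (t * (u * (y * (u * ((1:G)))))))) := h 1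
    _ = u * (u*y*t*u*y*u) := by group

lemma lem_K {p q t y : G} (hpt : Commute p t) (hqt : Commute q t)
    (bp : p*y*p = y*p*y) (bq : q*y*q = y*q*y) (bt : t*y*t = y*t*y) :
    (q*y*t*q*y*q)*q*(p*y*t*p*y*p)⁻¹ = (q*t*t*q⁻¹)*(y*q*p⁻¹*y⁻¹)*t⁻¹ := by
  have h : ∀ z : G, q * (y * (t * (q * (y * (q * (q * (p⁻¹ * (y⁻¹ * (p⁻¹ * (t⁻¹ * (y⁻¹ * (p⁻¹ * (z))))))))))))) =
      q * (t * (t * (q⁻¹ * (y * (q * (p⁻¹ * (y⁻¹ * (t⁻¹ * (z))))))))) := by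
    intro z
    calc q * (y * (t * (q * (y * (q * (q * (p⁻¹ * (y⁻¹ * (p⁻¹ * (t⁻¹ * (y⁻¹ * (p⁻¹ * (z)))))))))))))
        _ = q * (y * (t * (y * (q * (y * (q * (p⁻¹ * (y⁻¹ * (p⁻¹ * (t⁻¹ * (y⁻¹ * (p⁻¹ * (z))))))))))))) := by rw [z3 bq (q * (p⁻¹ * (y⁻¹ * (p⁻¹ * (t⁻¹ * (y⁻¹ * (p⁻¹ * (z))))))))]
        _ = q * (t * (y * (t * (q * (y * (q * (p⁻¹ * (y⁻¹ * (p⁻¹ * (t⁻¹ * (y⁻¹ * (p⁻¹ * (z))))))))))))) := by rw [(z3 bt (q * (y * (q * (p⁻¹ * (y⁻¹ * (p⁻¹ * (t⁻¹ * (y⁻¹ * (p⁻¹ * (z))))))))))).symm]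
        _ = q * (t * (y * (t * (q * (y * (q * (y⁻¹ * (p⁻¹ * (y⁻¹ * (t⁻¹ * (y⁻¹ * (p⁻¹ * (z))))))))))))) := by rw [z3 (brd_inv bp) (t⁻¹ * (y⁻¹ * (p⁻¹ * (z))))]
        _ = q * (t * (y * (t * (q * (q⁻¹ * (y * (q * (p⁻¹ * (y⁻¹ * (t⁻¹ * (y⁻¹ * (p⁻¹ * (z))))))))))))) := by rw [(z3 (brd_1 bq) (p⁻¹ * (y⁻¹ * (t⁻¹ * (y⁻¹ * (p⁻¹ * (z))))))).symm]
        _ = q * (t * (y * (t * (y * (q * (p⁻¹ * (y⁻¹ * (t⁻¹ * (y⁻¹ * (p⁻¹ * (z))))))))))) := by rw [mul_inv_cancel_left (q) (y * (q * (p⁻¹ * (y⁻¹ * (t⁻¹ * (y⁻¹ * (p⁻¹ * (z))))))))]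
        _ = q * (t * (t * (y * (t * (q * (p⁻¹ * (y⁻¹ * (t⁻¹ * (y⁻¹ * (p⁻¹ * (z))))))))))) := by rw [(z3 bt (q * (p⁻¹ * (y⁻¹ * (t⁻¹ * (y⁻¹ * (p⁻¹ * (z)))))))).symm]
        _ = q * (t * (t * (y * (q * (t * (p⁻¹ * (y⁻¹ * (t⁻¹ * (y⁻¹ * (p⁻¹ * (z))))))))))) := by rw [zc ((hqt).symm) (p⁻¹ * (y⁻¹ * (t⁻¹ * (y⁻¹ * (p⁻¹ * (z))))))]
        _ = q * (t * (t * (y * (q * (p⁻¹ * (t * (y⁻¹ * (t⁻¹ * (y⁻¹ * (p⁻¹ * (z))))))))))) := by rw [zc (((hpt).symm).inv_right) (y⁻¹ * (t⁻¹ * (y⁻¹ * (p⁻¹ * (z)))))]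
        _ = q * (t * (t * (y * (q * (p⁻¹ * (y⁻¹ * (t⁻¹ * (y * (y⁻¹ * (p⁻¹ * (z))))))))))) := by rw [z3 (brd_3 bt) (y⁻¹ * (p⁻¹ * (z)))]
        _ = q * (t * (t * (y * (q * (p⁻¹ * (y⁻¹ * (t⁻¹ * (p⁻¹ * (z))))))))) := by rw [mul_inv_cancel_left (y) (p⁻¹ * (z))]
        _ = q * (t * (t * (y * (q * (p⁻¹ * (y⁻¹ * (p⁻¹ * (t⁻¹ * (z))))))))) := by rw [zc ((((hpt).symm).inv_left).inv_right) (z)]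
        _ = q * (t * (t * (y * (q * (y⁻¹ * (p⁻¹ * (y⁻¹ * (t⁻¹ * (z))))))))) := by rw [z3 (brd_inv bp) (t⁻¹ * (z))]
        _ = q * (t * (t * (q⁻¹ * (y * (q * (p⁻¹ * (y⁻¹ * (t⁻¹ * (z))))))))) := by rw [(z3 (brd_1 bq) (p⁻¹ * (y⁻¹ * (t⁻¹ * (z))))).symm]
  calc (q*y*t*q*y*q)*q*(p*y*t*p*y*p)⁻¹
      = q * (y * (t * (q * (y * (q * (q * (p⁻¹ * (y⁻¹ * (p⁻¹ * (t⁻¹ * (y⁻¹ * (p⁻¹ * ((1:G)))))))))))))) := by group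
    _ = q * (t * (t * (q⁻¹ * (y * (q * (p⁻¹ * (y⁻¹ * (t⁻¹ * ((1:G)))))))))) := h 1
    _ = (q*t*t*q⁻¹)*(y*q*p⁻¹*y⁻¹)*t⁻¹ := by group

lemma lem_DMD {p q M y : G} (hpM : Commute p M) (hqM : Commute q M)
    (bp : p*y*p = y*p*y) (bM : M*y*M = y*M*y) :
    (y*q*p⁻¹*y⁻¹)*M*(y*q*p⁻¹*y⁻¹)⁻¹ =
      y * (M * (q * (y * (p * (y⁻¹ * (q⁻¹ * (M⁻¹ * (y⁻¹)))))))) := by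
  have h : ∀ z : G, y * (q * (p⁻¹ * (y⁻¹ * (M * (y * (p * (q⁻¹ * (y⁻¹ * (z))))))))) =
      y * (M * (q * (y * (p * (y⁻¹ * (q⁻¹ * (M⁻¹ * (y⁻¹ * (z))))))))) := by
    intro z
    calc y * (q * (p⁻¹ * (y⁻¹ * (M * (y * (p * (q⁻¹ * (y⁻¹ * (z)))))))))
        _ = y * (q * (p⁻¹ * (M * (y * (M⁻¹ * (p * (q⁻¹ * (y⁻¹ * (z))))))))) := by rw [(z3 (brd_2 bM) (p * (q⁻¹ * (y⁻¹ * (z))))).symm]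
        _ = y * (q * (M * (p⁻¹ * (y * (M⁻¹ * (p * (q⁻¹ * (y⁻¹ * (z))))))))) := by rw [zc ((hpM).inv_left) (y * (M⁻¹ * (p * (q⁻¹ * (y⁻¹ * (z))))))]
        _ = y * (q * (M * (p⁻¹ * (y * (p * (M⁻¹ * (q⁻¹ * (y⁻¹ * (z))))))))) := by rw [zc (((hpM).symm).inv_left) (q⁻¹ * (y⁻¹ * (z)))]
        _ = y * (M * (q * (p⁻¹ * (y * (p * (M⁻¹ * (q⁻¹ * (y⁻¹ * (z))))))))) := by rw [zc (hqM) (p⁻¹ * (y * (p * (M⁻¹ * (q⁻¹ * (y⁻¹ * (z)))))))]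
        _ = y * (M * (q * (p⁻¹ * (y * (p * (q⁻¹ * (M⁻¹ * (y⁻¹ * (z))))))))) := by rw [zc ((((hqM).symm).inv_left).inv_right) (y⁻¹ * (z))]
        _ = y * (M * (q * (y * (p * (y⁻¹ * (q⁻¹ * (M⁻¹ * (y⁻¹ * (z))))))))) := by rw [z3 (brd_1 bp) (q⁻¹ * (M⁻¹ * (y⁻¹ * (z))))]
  calc (y*q*p⁻¹*y⁻¹)*M*(y*q*p⁻¹*y⁻¹)⁻¹
      = y * (q * (p⁻¹ * (y⁻¹ * (M * (y * (p * (q⁻¹ * (y⁻¹ * ((1:G)))))))))) := by group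
    _ = y * (M * (q * (y * (p * (y⁻¹ * (q⁻¹ * (M⁻¹ * (y⁻¹ * ((1:G)))))))))) := h 1
    _ = y * (M * (q * (y * (p * (y⁻¹ * (q⁻¹ * (M⁻¹ * (y⁻¹)))))))) := by group


lemma key_last (p t M y : G) (hpt : Commute p t) (hpM : Commute p M)
    (bp : p*y*p = y*p*y) (bt : t*y*t = y*t*y) :
    M * (M⁻¹ * (p*y*t*p*y*p)⁻¹ * t⁻¹ * M * (p*y*t*p*y*p) * M) * M⁻¹ =
      (M⁻¹*t)⁻¹ * (M⁻¹ * (p*y*t*p*y*p)⁻¹ * t⁻¹ * M * (p*y*t*p*y*p) * M) * (M⁻¹*t) := by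
  set A := p*y*t*p*y*p with hA
  have h1 : A * t = p * A := by rw [hA]; exact lem_At hpt bp bt
  have eAp : A⁻¹*p = t*A⁻¹ := by
    calc A⁻¹*p = A⁻¹*(p*A)*A⁻¹ := by group
      _ = A⁻¹*(A*t)*A⁻¹ := by rw [h1]
      _ = t*A⁻¹ := by group
  have hptM : Commute p (t⁻¹*M) := hpt.inv_right.mul_right hpM
  have hPt : (A⁻¹*t⁻¹*M*A)*t = t*(A⁻¹*t⁻¹*M*A) := by
    calc (A⁻¹*t⁻¹*M*A)*t = A⁻¹*t⁻¹*M*(A*t) := by group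
      _ = A⁻¹*t⁻¹*M*(p*A) := by rw [h1]
      _ = A⁻¹*((t⁻¹*M)*p)*A := by group
      _ = A⁻¹*(p*(t⁻¹*M))*A := by rw [← hptM.eq]
      _ = (A⁻¹*p)*(t⁻¹*M*A) := by group
      _ = (t*A⁻¹)*(t⁻¹*M*A) := by rw [eAp]
      _ = t*(A⁻¹*t⁻¹*M*A) := by group
  calc M * (M⁻¹ * A⁻¹ * t⁻¹ * M * A * M) * M⁻¹
      = A⁻¹*t⁻¹*M*A := by group
    _ = t⁻¹*(t*(A⁻¹*t⁻¹*M*A)) := by group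
    _ = t⁻¹*((A⁻¹*t⁻¹*M*A)*t) := by rw [← hPt]
    _ = (M⁻¹*t)⁻¹ * (M⁻¹ * A⁻¹ * t⁻¹ * M * A * M) * (M⁻¹*t) := by group

lemma key_main (p q t M y : G)
    (hpq : Commute p q) (hpt : Commute p t) (hpM : Commute p M)
    (hqt : Commute q t) (hqM : Commute q M) (htM : Commute t M)
    (bp : p*y*p = y*p*y) (bq : q*y*q = y*q*y) (bt : t*y*t = y*t*y) (bM : M*y*M = y*M*y)
    (hw : Commute p ((q*y*t*q*y*q)⁻¹ * M * (q*y*t*q*y*q))) :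
    q * (M⁻¹ * (p*y*t*p*y*p)⁻¹ * t⁻¹ * M * (p*y*t*p*y*p) * M) * q⁻¹ =
      (M⁻¹ * (q*y*t*q*y*q)⁻¹ * t⁻¹ * M * (q*y*t*q*y*q) * M)⁻¹ *
        (M⁻¹ * (p*y*t*p*y*p)⁻¹ * t⁻¹ * M * (p*y*t*p*y*p) * M) *
        (M⁻¹ * (q*y*t*q*y*q)⁻¹ * t⁻¹ * M * (q*y*t*q*y*q) * M) := by
  set A := p*y*t*p*y*p with hA
  set B := q*y*t*q*y*q with hB
  have h2p : t * A = A * p := by rw [hA]; exact lem_tA hpt bp bt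
  have h2q : t * B = B * q := by rw [hB]; exact lem_tA hqt bq bt
  have eAinv : A⁻¹ * t⁻¹ = p⁻¹ * A⁻¹ := by
    calc A⁻¹*t⁻¹ = (t*A)⁻¹ := by group
      _ = (A*p)⁻¹ := by rw [h2p]
      _ = p⁻¹*A⁻¹ := by group
  have eBinv : B⁻¹ * t⁻¹ = q⁻¹ * B⁻¹ := by
    calc B⁻¹*t⁻¹ = (t*B)⁻¹ := by group
      _ = (B*q)⁻¹ := by rw [h2q]
      _ = q⁻¹*B⁻¹ := by group
  -- L6 : Commute (D M D⁻¹) M  with D = y*q*p⁻¹*y⁻¹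
  have hDM : Commute ((y*q*p⁻¹*y⁻¹)*M*(y*q*p⁻¹*y⁻¹)⁻¹) M := by
    have c1 : Commute (y*p*y⁻¹) (y*q*y⁻¹) := comm_conj y hpq
    rw [show y*q*y⁻¹ = q⁻¹*y*q from (brd_1 bq).symm] at c1
    have c2 := comm_conj q c1
    rw [show q*(q⁻¹*y*q)*q⁻¹ = y from by group] at c2
    have c3 := comm_conj M c2
    rw [show M*y*M⁻¹ = y⁻¹*M*y from brd_2 bM] at c3
    have eDMD : M*(q*(y*p*y⁻¹)*q⁻¹)*M⁻¹ = y⁻¹*((y*q*p⁻¹*y⁻¹)*M*(y*q*p⁻¹*y⁻¹)⁻¹)*y := by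
      rw [lem_DMD hpM hqM bp bM]; group
    rw [eDMD] at c3
    exact comm_conj_cancel' y c3
  -- the conjugating word K = B*q*A⁻¹
  have hK : B*q*A⁻¹ = (q*t*t*q⁻¹)*(y*q*p⁻¹*y⁻¹)*t⁻¹ := by
    rw [hA, hB]; exact lem_K hpt hqt bp bq bt
  have etMt : t⁻¹*M*t = M := by rw [mul_assoc, ← htM.eq, inv_mul_cancel_left]
  have hcM : Commute (q*t*t*q⁻¹) M :=
    ((hqM.mul_left htM).mul_left htM).mul_left hqM.inv_left
  have ecM : (q*t*t*q⁻¹)*M*(q*t*t*q⁻¹)⁻¹ = M := by rw [hcM.eq, mul_inv_cancel_right]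
  have hKMK : Commute ((B*q*A⁻¹)*M*(B*q*A⁻¹)⁻¹) M := by
    have e3 : (B*q*A⁻¹)*M*(B*q*A⁻¹)⁻¹ =
        (q*t*t*q⁻¹)*((y*q*p⁻¹*y⁻¹)*(t⁻¹*M*t)*(y*q*p⁻¹*y⁻¹)⁻¹)*(q*t*t*q⁻¹)⁻¹ := by
      rw [hK]; group
    rw [e3, etMt]
    have h := comm_conj (q*t*t*q⁻¹) hDM
    rwa [ecM] at h
  have h5 : Commute (A⁻¹*M*A) (q⁻¹*(B⁻¹*M*B)*q) := by
    apply comm_conj_cancel (B*q)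
    have e1 : (B*q)*(q⁻¹*(B⁻¹*M*B)*q)*(B*q)⁻¹ = M := by group
    have e2 : (B*q)*(A⁻¹*M*A)*(B*q)⁻¹ = (B*q*A⁻¹)*M*(B*q*A⁻¹)⁻¹ := by group
    rw [e1, e2]
    exact hKMK
  have h6 : Commute p (q⁻¹*(B⁻¹*M*B)*q) := (hpq.inv_right.mul_right hw).mul_right hpq
  have h7 : Commute (p⁻¹*(A⁻¹*M*A)) (q⁻¹*(B⁻¹*M*B)*q) := h6.inv_left.mul_left h5
  have eFi : M⁻¹ * A⁻¹ * t⁻¹ * M * A * M = M⁻¹*(p⁻¹*(A⁻¹*M*A))*M := by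
    calc M⁻¹ * A⁻¹ * t⁻¹ * M * A * M = M⁻¹*(A⁻¹*t⁻¹)*(M*A*M) := by group
      _ = M⁻¹*(p⁻¹*A⁻¹)*(M*A*M) := by rw [eAinv]
      _ = M⁻¹*(p⁻¹*(A⁻¹*M*A))*M := by group
  have eFjq : (M⁻¹ * B⁻¹ * t⁻¹ * M * B * M)*q = M⁻¹*(q⁻¹*(B⁻¹*M*B)*q)*M := by
    calc (M⁻¹ * B⁻¹ * t⁻¹ * M * B * M)*q = M⁻¹*(B⁻¹*t⁻¹)*(M*B*(M*q)) := by group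
      _ = M⁻¹*(q⁻¹*B⁻¹)*(M*B*(M*q)) := by rw [eBinv]
      _ = M⁻¹*(q⁻¹*B⁻¹)*(M*B*(q*M)) := by rw [← hqM.eq]
      _ = M⁻¹*(q⁻¹*(B⁻¹*M*B)*q)*M := by group
  have hC : Commute (M⁻¹ * A⁻¹ * t⁻¹ * M * A * M) ((M⁻¹ * B⁻¹ * t⁻¹ * M * B * M)*q) := by
    rw [eFi, eFjq]
    exact comm_conj' M h7
  have hfin := hC.eq
  calc q * (M⁻¹ * A⁻¹ * t⁻¹ * M * A * M) * q⁻¹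
      = (M⁻¹*B⁻¹*t⁻¹*M*B*M)⁻¹ * ((M⁻¹*B⁻¹*t⁻¹*M*B*M * q) * (M⁻¹*A⁻¹*t⁻¹*M*A*M)) * q⁻¹ := by
        group
    _ = (M⁻¹*B⁻¹*t⁻¹*M*B*M)⁻¹ * ((M⁻¹*A⁻¹*t⁻¹*M*A*M) * (M⁻¹*B⁻¹*t⁻¹*M*B*M * q)) * q⁻¹ := by
        rw [← hfin]
    _ = (M⁻¹*B⁻¹*t⁻¹*M*B*M)⁻¹ * (M⁻¹*A⁻¹*t⁻¹*M*A*M) * (M⁻¹*B⁻¹*t⁻¹*M*B*M) := by group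


section Inst
open LabruereParisP
variable {g n : ℕ}

lemma mk_rel {r : FreeGroup (S g n)} (h : r ∈ artinRels g n ∪ prRels g n) :
    PresentedGroup.mk (artinRels g n ∪ prRels g n) r = 1 :=
  (QuotientGroup.eq_one_iff r).mpr (Subgroup.subset_normalClosure h)

lemma fx_eq {i : ℕ} (h : i < n + 1) : fx g n i = FreeGroup.of (Sum.inl ⟨i, h⟩) := dif_pos h

lemma fy1_eq (hg : 1 ≤ g) (h0 : 0 < 2 * g - 1) :
    fy g n 1 = FreeGroup.of (Sum.inr (Sum.inl ⟨0, h0⟩)) := dif_pos ⟨le_refl 1, by omega⟩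

lemma X_comm (a b : ℕ) (ha : a < n + 1) (hb : b < n + 1) (hab : a ≠ b) :
    Commute (X g n a) (X g n b) := by
  have hne : (Sum.inl ⟨a, ha⟩ : S g n) ≠ Sum.inl ⟨b, hb⟩ := by
    simp only [ne_eq, Sum.inl.injEq, Fin.mk.injEq]
    exact hab
  have hcox : cox g n (Sum.inl ⟨a, ha⟩ : S g n) (Sum.inl ⟨b, hb⟩) = 2 := by
    show (if (Sum.inl ⟨a, ha⟩ : S g n) = Sum.inl ⟨b, hb⟩ then 1 else 2) = 2
    rw [if_neg hne]
  have h := mk_rel (g := g) (n := n) (Or.inl ⟨_, _, hne, rfl⟩)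
  rw [hcox] at h
  rw [map_mul, map_inv, mul_inv_eq_one] at h
  rw [show altWord (Sum.inl ⟨a, ha⟩ : S g n) (Sum.inl ⟨b, hb⟩) 2
        = .of (Sum.inl ⟨a, ha⟩) * (.of (Sum.inl ⟨b, hb⟩) * 1) from rfl,
      show altWord (Sum.inl ⟨b, hb⟩ : S g n) (Sum.inl ⟨a, ha⟩) 2
        = .of (Sum.inl ⟨b, hb⟩) * (.of (Sum.inl ⟨a, ha⟩) * 1) from rfl] at h
  simp only [map_mul, map_one, mul_one] at h
  rw [commute_iff_eq]
  simp only [X]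
  rw [fx_eq ha, fx_eq hb]
  exact h

lemma X_braid (hg : 1 ≤ g) (a : ℕ) (ha : a < n + 1) :
    X g n a * Y g n 1 * X g n a = Y g n 1 * X g n a * Y g n 1 := by
  have h0 : (0:ℕ) < 2 * g - 1 := by omega
  have hne : (Sum.inl ⟨a, ha⟩ : S g n) ≠ Sum.inr (Sum.inl ⟨0, h0⟩) := by
    simp only [ne_eq, reduceCtorEq, not_false_eq_true]
  have hcox : cox g n (Sum.inl ⟨a, ha⟩ : S g n) (Sum.inr (Sum.inl ⟨0, h0⟩)) = 3 := by
    show (if ((⟨0, h0⟩ : Fin (2 * g - 1)) : ℕ) = 0 then 3 else 2) = 3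
    rw [if_pos rfl]
  have h := mk_rel (g := g) (n := n) (Or.inl ⟨_, _, hne, rfl⟩)
  rw [hcox] at h
  rw [map_mul, map_inv, mul_inv_eq_one] at h
  rw [show altWord (Sum.inl ⟨a, ha⟩ : S g n) (Sum.inr (Sum.inl ⟨0, h0⟩)) 3
        = .of (Sum.inl ⟨a, ha⟩) * (.of (Sum.inr (Sum.inl ⟨0, h0⟩)) *
            (.of (Sum.inl ⟨a, ha⟩) * 1)) from rfl,
      show altWord (Sum.inr (Sum.inl ⟨0, h0⟩) : S g n) (Sum.inl ⟨a, ha⟩) 3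
        = .of (Sum.inr (Sum.inl ⟨0, h0⟩)) * (.of (Sum.inl ⟨a, ha⟩) *
            (.of (Sum.inr (Sum.inl ⟨0, h0⟩)) * 1)) from rfl] at h
  simp only [map_mul, map_one, mul_one] at h
  have eX : X g n a = PresentedGroup.mk _ (FreeGroup.of (Sum.inl ⟨a, ha⟩)) := by
    simp only [X]; rw [fx_eq ha]
  have eY : Y g n 1 = PresentedGroup.mk _ (FreeGroup.of (Sum.inr (Sum.inl ⟨0, h0⟩))) := by
    simp only [Y]; rw [fy1_eq hg h0]
  rw [eX, eY, mul_assoc, h, mul_assoc]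

lemma X_pr3 (hn : 2 ≤ n) (k j : ℕ) (hk : k < j) (hj : j < n - 1) :
    Commute (X g n k)
      ((X g n j * Y g n 1 * X g n n * X g n j * Y g n 1 * X g n j)⁻¹ * X g n (n - 1) *
        (X g n j * Y g n 1 * X g n n * X g n j * Y g n 1 * X g n j)) := by
  have h := mk_rel (g := g) (n := n)
    (Or.inr (Or.inr (Or.inr (Or.inl ⟨n - 1, j, k, hk, hj, le_rfl, rfl⟩))))
  rw [Wrel, show n - 1 + 1 = n from by omega] at h
  rw [map_mul, map_mul, map_inv, mul_inv_eq_one] at h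
  simp only [map_mul, map_inv] at h
  rw [commute_iff_eq]
  simp only [X, Y]
  exact h

end Inst
end LP2aux

open LabruereParisP in
/-- The verification of relation (PT2) in the proof of Proposition 3.3 of
Labruère–Paris: in `PG(g,0,n)`, `x_jF_ix_j⁻¹ = F_{j+1}⁻¹F_iF_{j+1}` for
`1 ≤ i ≤ j ≤ n-1`. -/
theorem relation_PT2 (g n : ℕ) (hg : 1 ≤ g) (hn : 2 ≤ n)
    (i j : ℕ) (hi : 1 ≤ i) (hij : i ≤ j) (hj : j ≤ n - 1) :
    X g n j * F g n i * (X g n j)⁻¹ = (F g n (j + 1))⁻¹ * F g n i * F g n (j + 1) := by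
  have hg1 : (0:ℕ) < 2 * g - 1 := by omega
  have hbp := LP2aux.X_braid (g := g) (n := n) hg (i - 1) (by omega)
  have hbt := LP2aux.X_braid (g := g) (n := n) hg n (by omega)
  have hbM := LP2aux.X_braid (g := g) (n := n) hg (n - 1) (by omega)
  have hpt := LP2aux.X_comm (g := g) (n := n) (i - 1) n (by omega) (by omega) (by omega)
  have hpM := LP2aux.X_comm (g := g) (n := n) (i - 1) (n - 1) (by omega) (by omega) (by omega)
  have htM := LP2aux.X_comm (g := g) (n := n) n (n - 1) (by omega) (by omega) (by omega)
  by_cases hc : j = n - 1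
  · subst hc
    rw [show n - 1 + 1 = n from by omega]
    have eFn : F g n n = (X g n (n - 1))⁻¹ * X g n n := if_pos rfl
    have eFi : F g n i =
        (X g n (n - 1))⁻¹ *
          (X g n (i - 1) * Y g n 1 * X g n n * X g n (i - 1) * Y g n 1 * X g n (i - 1))⁻¹ *
          (X g n n)⁻¹ * X g n (n - 1) *
          (X g n (i - 1) * Y g n 1 * X g n n * X g n (i - 1) * Y g n 1 * X g n (i - 1)) *
          X g n (n - 1) := if_neg (show ¬ i = n from by omega)
    rw [eFn, eFi]
    exact LP2aux.key_last (X g n (i - 1)) (X g n n) (X g n (n - 1)) (Y g n 1)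
      hpt hpM hbp hbt
  · have hjn : j < n - 1 := lt_of_le_of_ne hj hc
    have hbq := LP2aux.X_braid (g := g) (n := n) hg j (by omega)
    have hpq := LP2aux.X_comm (g := g) (n := n) (i - 1) j (by omega) (by omega) (by omega)
    have hqt := LP2aux.X_comm (g := g) (n := n) j n (by omega) (by omega) (by omega)
    have hqM := LP2aux.X_comm (g := g) (n := n) j (n - 1) (by omega) (by omega) (by omega)
    have hw := LP2aux.X_pr3 (g := g) (n := n) hn (i - 1) j (by omega) hjn
    have eFi : F g n i =
        (X g n (n - 1))⁻¹ *
          (X g n (i - 1) * Y g n 1 * X g n n * X g n (i - 1) * Y g n 1 * X g n (i - 1))⁻¹ *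
          (X g n n)⁻¹ * X g n (n - 1) *
          (X g n (i - 1) * Y g n 1 * X g n n * X g n (i - 1) * Y g n 1 * X g n (i - 1)) *
          X g n (n - 1) := if_neg (show ¬ i = n from by omega)
    have eFj : F g n (j + 1) =
        (X g n (n - 1))⁻¹ *
          (X g n j * Y g n 1 * X g n n * X g n j * Y g n 1 * X g n j)⁻¹ *
          (X g n n)⁻¹ * X g n (n - 1) *
          (X g n j * Y g n 1 * X g n n * X g n j * Y g n 1 * X g n j) *
          X g n (n - 1) := if_neg (show ¬ j + 1 = n from by omega)
    rw [eFi, eFj]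
    exact LP2aux.key_main (X g n (i - 1)) (X g n j) (X g n n) (X g n (n - 1)) (Y g n 1)
      hpq hpt hpM hqt hqM htM hbp hbq hbt hbM hw
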